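/- Let G be a split graph with clique C and independent set I, and let \sigma be an ordering of V satisfying the MNS 3-point condition in which the first vertex is in C. Then in \sigma, every vertex of I that appears before the last vertex of C has all of its earlier clique vertices as neighbors. -/
import Mathlib


/-- In an MNS ordering of a split graph starting at a clique vertex, every
independent-set vertex that appears before the last clique vertex is adjacent to all
clique vertices that appear before it. -/
theorem mns_split_start_clique_earlier_neighbors {V : Type*} [Fintype V]
    (G : SimpleGraph V) (C I : Set V)
    (hpart : ∀ x : V, (x ∈ C ∨ x ∈ I) ∧ ¬ (x ∈ C ∧ x ∈ I))
    (hC : G.IsClique C) (hI : ∀ a ∈ I, ∀ b ∈ I, ¬ G.Adj a b)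
    (hn : 0 < Fintype.card V) (σ : Fin (Fintype.card V) ≃ V)
    (hstart : σ ⟨0, hn⟩ ∈ C)
    (hmns : ∀ a b c : Fin (Fintype.card V), a < b → b < c →
      G.Adj (σ a) (σ c) → ¬ G.Adj (σ a) (σ b) →
      ∃ d, d < b ∧ G.Adj (σ d) (σ b) ∧ ¬ G.Adj (σ d) (σ c)) :
    ∀ i : Fin (Fintype.card V), σ i ∈ I → (∃ j, i < j ∧ σ j ∈ C) →
      ∀ k, k < i → σ k ∈ C → G.Adj (σ k) (σ i) := by
  intro i hiI ⟨j, hij, hjC⟩ k hki hkC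
  by_contra hadj
  have hkj : G.Adj (σ k) (σ j) := hC hkC hjC (by
    intro h; exact absurd (σ.injective h) (Fin.ne_of_lt (hki.trans hij)))
  obtain ⟨d, hdi, hdadj, hdnadj⟩ := hmns k i j hki hij hkj hadj
  have hdC : σ d ∈ C := by
    rcases (hpart (σ d)).1 with h | h
    · exact h
    · exact absurd hdadj (hI _ h _ hiI)
  exact hdnadj (hC hdC hjC (by
    intro h; exact absurd (σ.injective h) (Fin.ne_of_lt (hdi.trans hij))))
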